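/- Fix π ∈ S_{d+1} and consider the vector w = e_{T(π,τ;r)} ∈ ℝ^{d+1} associated to the rank-r element of the chain ch(π,τ). Then, with u_i = w_{π^{-1}(i)} and (Δu)_i = u_{i+1} − u_i, this vector is the unique solution in W_d = ℝ^{d+1}/ℝ·1 of the system: (Δu)_{τ^{-1}(1)} = ... = (Δu)_{τ^{-1}(r)} = 0 and (Δu)_{τ^{-1}(r+1)} = ... = (Δu)_{τ^{-1}(d)} = 1. In particular, the cone σ(π,τ) = {x : 0 ≤ (Δx)^π_{τ^{-1}(1)} ≤ ... ≤ (Δx)^π_{τ^{-1}(d)}} is simplicial, spanned by the d rays e_{T(π,τ;r)}, 0 ≤ r ≤ d−1. -/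

import Mathlib

/-- `eTvec d π τ r` is the vector `e_{T(π,τ;r)}` of the rank-`r` element of the maximal chain
`ch(π,τ)`: the coordinate at `x` is the 1-based index of the block of `x` after removing the
bars with label `< r` from the diagram of `π` labeled by `τ`. -/
noncomputable def eTvec (d : ℕ) (π : Equiv.Perm (Fin (d+1))) (τ : Equiv.Perm (Fin d))
    (r : ℕ) : Fin (d+1) → ℝ :=
  fun x => 1 + ((Finset.univ.filter
    fun j : Fin d => (j : ℕ) < (π x : ℕ) ∧ r ≤ (τ j : ℕ)).card : ℝ)

lemma eTvec_diff (d : ℕ) (π : Equiv.Perm (Fin (d+1))) (τ : Equiv.Perm (Fin d))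
    (s : ℕ) (b : Fin d) :
    eTvec d π τ s (π⁻¹ (Fin.succ b)) - eTvec d π τ s (π⁻¹ (Fin.castSucc b))
      = if s ≤ (τ b : ℕ) then 1 else 0 := by
  unfold eTvec
  simp only [Equiv.Perm.coe_inv, Equiv.apply_symm_apply, Fin.val_succ, Fin.coe_castSucc]
  rw [Finset.card_filter, Finset.card_filter]
  push_cast
  rw [show ∀ a b : ℝ, 1 + a - (1 + b) = a - b by intros; ring]
  rw [← Finset.sum_sub_distrib]
  rw [Finset.sum_eq_single b]
  · by_cases h : s ≤ (τ b : ℕ) <;> simp [h, Nat.lt_succ_self]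
  · intro j _ hj
    have : ((j:ℕ) < (b:ℕ) + 1) ↔ ((j:ℕ) < (b:ℕ)) := by
      constructor
      · intro h
        rcases Nat.lt_succ_iff_lt_or_eq.mp h with h | h
        · exact h
        · exact absurd (Fin.ext h) hj
      · exact fun h => Nat.lt_succ_of_lt h
    simp only [this]; ring
  · simp

lemma diff_const (d : ℕ) (π : Equiv.Perm (Fin (d+1))) (w v : Fin (d+1) → ℝ)
    (h : ∀ b : Fin d, w (π⁻¹ (Fin.succ b)) - w (π⁻¹ (Fin.castSucc b))
        = v (π⁻¹ (Fin.succ b)) - v (π⁻¹ (Fin.castSucc b))) :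
    ∃ c : ℝ, w = fun x => v x + c := by
  refine ⟨w (π⁻¹ 0) - v (π⁻¹ 0), ?_⟩
  have key : ∀ i : Fin (d+1), w (π⁻¹ i) = v (π⁻¹ i) + (w (π⁻¹ 0) - v (π⁻¹ 0)) := by
    intro i
    induction i using Fin.induction with
    | zero => ring
    | succ b ih =>
      have := h b
      have hb : w (π⁻¹ (Fin.succ b)) = v (π⁻¹ (Fin.succ b)) + (w (π⁻¹ b.castSucc) - v (π⁻¹ b.castSucc)) := by
        linarith
      rw [hb, ih]; ring
  funext x
  have := key (π x)
  simpa using this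


/-- Proof of Proposition `prop:charbr2`: the vector `w = e_{T(π,τ;r)}` is, uniquely up to
adding a multiple of the all-ones vector, the solution of the system
`(Δw)^π_{τ⁻¹(j)} = 0` for labels `j < r` and `= 1` for labels `j ≥ r`; consequently the cone
`σ(π,τ) = {x : 0 ≤ (Δx)^π_{τ⁻¹(1)} ≤ ⋯ ≤ (Δx)^π_{τ⁻¹(d)}}` is simplicial, spanned (modulo
the all-ones line) by the rays `e_{T(π,τ;r)}`, `0 ≤ r ≤ d−1`. Here
`(Δx)^π_b = x(π⁻¹(b+1)) − x(π⁻¹(b))`. -/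
theorem eTvec_solves_system (d : ℕ) (π : Equiv.Perm (Fin (d+1)))
    (τ : Equiv.Perm (Fin d)) (r : ℕ) (hr : r ≤ d) :
    (∀ b : Fin d,
      eTvec d π τ r (π⁻¹ (Fin.succ b)) - eTvec d π τ r (π⁻¹ (Fin.castSucc b))
        = if (τ b : ℕ) < r then 0 else 1) ∧
    (∀ w : Fin (d+1) → ℝ,
      (∀ b : Fin d,
        w (π⁻¹ (Fin.succ b)) - w (π⁻¹ (Fin.castSucc b))
          = if (τ b : ℕ) < r then 0 else 1) →
      ∃ c : ℝ, w = fun x => eTvec d π τ r x + c) ∧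
    (∀ x : Fin (d+1) → ℝ,
      ((∀ j : Fin d, 0 ≤ x (π⁻¹ (Fin.succ j)) - x (π⁻¹ (Fin.castSucc j))) ∧
        (∀ j j' : Fin d, (τ j : ℕ) ≤ (τ j' : ℕ) →
          x (π⁻¹ (Fin.succ j)) - x (π⁻¹ (Fin.castSucc j))
            ≤ x (π⁻¹ (Fin.succ j')) - x (π⁻¹ (Fin.castSucc j'))))
      ↔ ∃ (c : Fin d → ℝ) (c₀ : ℝ), (∀ s, 0 ≤ c s) ∧
          x = fun y => (∑ s : Fin d, c s * eTvec d π τ (s : ℕ) y) + c₀) := by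
  have hdiff : ∀ (s : ℕ) (b : Fin d),
      eTvec d π τ s (π⁻¹ (Fin.succ b)) - eTvec d π τ s (π⁻¹ (Fin.castSucc b))
        = if s ≤ (τ b : ℕ) then 1 else 0 := eTvec_diff d π τ
  refine ⟨?_, ?_, ?_⟩
  · intro b
    rw [hdiff r b]
    by_cases h : (τ b : ℕ) < r
    · simp [h, not_le.mpr h]
    · simp [h, not_lt.mp h]
  · intro w hw
    apply diff_const
    intro b
    rw [hw b, hdiff r b]
    by_cases h : (τ b : ℕ) < r
    · simp [h, not_le.mpr h]
    · simp [h, not_lt.mp h]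
  · intro x
    constructor
    · rintro ⟨h0, hmono⟩
      set D : Fin d → ℝ := fun b => x (π⁻¹ (Fin.succ b)) - x (π⁻¹ (Fin.castSucc b)) with hD
      set gfun : ℕ → ℝ := fun k => if h : k < d then D (τ⁻¹ ⟨k, h⟩) else 0 with hgfun
      set G : ℕ → ℝ := fun k => if k = 0 then 0 else gfun (k - 1) with hG
      have hG0 : G 0 = 0 := by simp [hG]
      have hGsucc : ∀ k : ℕ, G (k + 1) = gfun k := by intro k; simp [hG]
      set c : Fin d → ℝ := fun s => G ((s : ℕ) + 1) - G (s : ℕ) with hc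
      have hcnonneg : ∀ s, 0 ≤ c s := by
        intro s
        rcases Nat.eq_zero_or_pos (s : ℕ) with h | h
        · have : c s = gfun 0 := by rw [hc]; simp [h, hG0, hGsucc]
          rw [this, hgfun]
          have hd : 0 < d := s.pos
          simp only [hd, dif_pos]
          exact h0 _
        · have hs : (s : ℕ) - 1 < d := lt_of_le_of_lt (Nat.sub_le _ _) s.isLt
          have hs' : (s : ℕ) < d := s.isLt
          have h1 : c s = gfun (s : ℕ) - gfun ((s : ℕ) - 1) := by
            have hne : (s : ℕ) ≠ 0 := Nat.pos_iff_ne_zero.mp h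
            rw [hc]
            simp only [hGsucc]
            congr 1
            rw [hG]
            simp [hne]
          rw [h1, hgfun]
          simp only [hs, hs', dif_pos]
          have := hmono (τ⁻¹ ⟨(s : ℕ) - 1, hs⟩) (τ⁻¹ ⟨(s : ℕ), hs'⟩)
            (by simp only [Equiv.Perm.coe_inv, Equiv.apply_symm_apply]; omega)
          simpa [hD, sub_nonneg] using this
      have hTel : ∀ k : ℕ, k < d →
          (∑ s : Fin d, c s * (if (s : ℕ) ≤ k then 1 else 0)) = gfun k := by
        intro k hk
        have hc_eq : ∀ s : Fin d, c s * (if (s : ℕ) ≤ k then 1 else 0)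
            = (fun i : ℕ => (G (i + 1) - G i) * (if i ≤ k then 1 else 0)) (s : ℕ) :=
          fun s => rfl
        rw [Finset.sum_congr rfl (fun s _ => hc_eq s),
          Fin.sum_univ_eq_sum_range (fun i : ℕ => (G (i + 1) - G i) * (if i ≤ k then 1 else 0)) d]
        have h2 : ∀ i ∈ Finset.range d, (G (i + 1) - G i) * (if i ≤ k then 1 else 0)
            = if i ≤ k then G (i + 1) - G i else 0 := by
          intro i _; by_cases h : i ≤ k <;> simp [h]
        rw [Finset.sum_congr rfl h2, ← Finset.sum_filter]
        have h3 : (Finset.range d).filter (· ≤ k) = Finset.range (k + 1) := by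
          ext i; simp; omega
        rw [h3, Finset.sum_range_sub G, hG0, sub_zero, hGsucc]
      set v : Fin (d+1) → ℝ := fun y => ∑ s : Fin d, c s * eTvec d π τ (s : ℕ) y with hv
      have hΔv : ∀ b : Fin d, v (π⁻¹ (Fin.succ b)) - v (π⁻¹ (Fin.castSucc b)) = D b := by
        intro b
        rw [hv]
        simp only
        rw [← Finset.sum_sub_distrib]
        have h4 : ∀ s : Fin d, c s * eTvec d π τ (s : ℕ) (π⁻¹ (Fin.succ b))
            - c s * eTvec d π τ (s : ℕ) (π⁻¹ (Fin.castSucc b))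
            = c s * (if (s : ℕ) ≤ (τ b : ℕ) then 1 else 0) := by
          intro s; rw [← mul_sub, hdiff (s : ℕ) b]
        rw [Finset.sum_congr rfl (fun s _ => h4 s), hTel (τ b : ℕ) (τ b).isLt, hgfun]
        simp only [(τ b).isLt, dif_pos, Fin.eta, Equiv.Perm.coe_inv, Equiv.symm_apply_apply]
      obtain ⟨c₀, hx⟩ := diff_const d π x v (fun b => by rw [hΔv b])
      exact ⟨c, c₀, hcnonneg, hx⟩
    · rintro ⟨c, c₀, hc, rfl⟩
      have hΔ : ∀ j : Fin d,
          (fun y => (∑ s : Fin d, c s * eTvec d π τ (s : ℕ) y) + c₀) (π⁻¹ (Fin.succ j))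
            - (fun y => (∑ s : Fin d, c s * eTvec d π τ (s : ℕ) y) + c₀) (π⁻¹ (Fin.castSucc j))
          = ∑ s : Fin d, c s * (if (s : ℕ) ≤ (τ j : ℕ) then 1 else 0) := by
        intro j
        simp only
        rw [show ∀ a b : ℝ, a + c₀ - (b + c₀) = a - b by intros; ring]
        rw [← Finset.sum_sub_distrib]
        congr 1; funext s
        rw [← mul_sub, hdiff (s : ℕ) j]
      constructor
      · intro j
        rw [hΔ j]
        apply Finset.sum_nonneg
        intro s _
        by_cases h : (s : ℕ) ≤ (τ j : ℕ) <;> simp [h, hc s]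
      · intro j j' hjj'
        rw [hΔ j, hΔ j']
        apply Finset.sum_le_sum
        intro s _
        by_cases h : (s : ℕ) ≤ (τ j : ℕ)
        · simp [h, le_trans h hjj']
        · by_cases h' : (s : ℕ) ≤ (τ j' : ℕ) <;> simp [h, h', hc s]
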